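/- Let H be a real Hilbert space, n ∈ ℕ, P ∈ ℝ^{n×n} symmetric, p_min > 0 a constant such that zᵀPz ≥ p_min|z|² for all z ∈ ℝⁿ, and M : ℝⁿ → H a bounded linear operator with operator norm ‖M‖. Define V(z,w) = zᵀPz + ‖w − Mz‖²_H. Then for all (z,w) ∈ ℝⁿ × H, V(z,w) ≥ min(p_min/2, p_min/(p_min + 2‖M‖²)) · (|z|² + ‖w‖²_H). Consequently, together with the corresponding upper bound, the norm induced by V is equivalent to the product norm on ℝⁿ × H. -/

import Mathlib

private lemma key_ineq (pmin a b s m c : ℝ) (ha : 0 ≤ a) (hs : 0 ≤ s) (hm : 0 ≤ m)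
    (hb0 : 0 ≤ b) (hb : b ≤ s + m * a) (hc1 : c ≤ pmin / 2)
    (hc2 : c * (pmin + 2 * m ^ 2) ≤ pmin) (hc0 : 0 ≤ c) (hp : 0 < pmin) :
    c * (a ^ 2 + b ^ 2) ≤ pmin * a ^ 2 + s ^ 2 := by
  have hD : 0 < pmin + 2 * m ^ 2 := by positivity
  have hb2 : b ^ 2 ≤ (s + m * a) ^ 2 := by nlinarith
  have e1 : c * b ^ 2 * (pmin + 2 * m ^ 2) ≤ pmin * (s + m * a) ^ 2 := by
    calc c * b ^ 2 * (pmin + 2 * m ^ 2) ≤ c * (s + m * a) ^ 2 * (pmin + 2 * m ^ 2) := by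
          apply mul_le_mul_of_nonneg_right _ hD.le
          exact mul_le_mul_of_nonneg_left hb2 hc0
      _ = c * (pmin + 2 * m ^ 2) * (s + m * a) ^ 2 := by ring
      _ ≤ pmin * (s + m * a) ^ 2 := mul_le_mul_of_nonneg_right hc2 (sq_nonneg _)
  have e2 : c * a ^ 2 * (pmin + 2 * m ^ 2) ≤ pmin / 2 * a ^ 2 * (pmin + 2 * m ^ 2) := by
    apply mul_le_mul_of_nonneg_right _ hD.le
    exact mul_le_mul_of_nonneg_right hc1 (sq_nonneg a)
  nlinarith [sq_nonneg (pmin * a - 2 * m * s), e1, e2, hD, sq_nonneg a]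

/-- Lower bound for the forwarding Lyapunov function `V(z,w) = zᵀPz + ‖w − Mz‖²`:
`V(z,w) ≥ min(p_min/2, p_min/(p_min + 2‖M‖²))·(|z|² + ‖w‖²)`; consequently (together
with the corresponding upper bound) the norm induced by `V` is equivalent to the
product norm on `ℝⁿ × H`. -/
theorem statement10 {H : Type*} [NormedAddCommGroup H] [InnerProductSpace ℝ H]
    (n : ℕ) (P : Matrix (Fin n) (Fin n) ℝ) (hP : P.IsSymm)
    (pmin : ℝ) (hpmin : 0 < pmin)
    (hPbound : ∀ z : EuclideanSpace ℝ (Fin n),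
      pmin * ‖z‖ ^ 2 ≤ dotProduct z (P.mulVec z))
    (M : EuclideanSpace ℝ (Fin n) →L[ℝ] H) :
    (∀ (z : EuclideanSpace ℝ (Fin n)) (w : H),
      min (pmin / 2) (pmin / (pmin + 2 * ‖M‖ ^ 2)) * (‖z‖ ^ 2 + ‖w‖ ^ 2)
        ≤ dotProduct z (P.mulVec z) + ‖w - M z‖ ^ 2) ∧
    (∃ c₁ c₂ : ℝ, 0 < c₁ ∧ 0 < c₂ ∧
      ∀ (z : EuclideanSpace ℝ (Fin n)) (w : H),
        c₁ * (‖z‖ ^ 2 + ‖w‖ ^ 2)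
            ≤ dotProduct z (P.mulVec z) + ‖w - M z‖ ^ 2 ∧
        dotProduct z (P.mulVec z) + ‖w - M z‖ ^ 2
            ≤ c₂ * (‖z‖ ^ 2 + ‖w‖ ^ 2)) := by
  set m : ℝ := ‖M‖ with hm_def
  have hm : 0 ≤ m := norm_nonneg M
  have hden : 0 < pmin + 2 * m ^ 2 := by positivity
  set c : ℝ := min (pmin / 2) (pmin / (pmin + 2 * m ^ 2)) with hc_def
  have hc0 : 0 < c := lt_min (by positivity) (by positivity)
  have hc1 : c ≤ pmin / 2 := min_le_left _ _
  have hc2 : c * (pmin + 2 * m ^ 2) ≤ pmin := by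
    have := min_le_right (pmin / 2) (pmin / (pmin + 2 * m ^ 2))
    rw [le_div_iff₀ hden] at this
    linarith
  have lower : ∀ (z : EuclideanSpace ℝ (Fin n)) (w : H),
      c * (‖z‖ ^ 2 + ‖w‖ ^ 2)
        ≤ dotProduct z (P.mulVec z) + ‖w - M z‖ ^ 2 := by
    intro z w
    have hb : ‖w‖ ≤ ‖w - M z‖ + m * ‖z‖ := by
      calc ‖w‖ = ‖(w - M z) + M z‖ := by rw [sub_add_cancel]
        _ ≤ ‖w - M z‖ + ‖M z‖ := norm_add_le _ _
        _ ≤ ‖w - M z‖ + m * ‖z‖ := by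
            have := M.le_opNorm z; linarith
    have := key_ineq pmin ‖z‖ ‖w‖ ‖w - M z‖ m c (norm_nonneg _) (norm_nonneg _)
      hm (norm_nonneg _) hb hc1 hc2 hc0.le hpmin
    have hP := hPbound z
    linarith
  refine ⟨lower, ?_⟩
  -- upper bound
  set T := Matrix.toEuclideanCLM (𝕜 := ℝ) P with hT_def
  have hdot : ∀ z : EuclideanSpace ℝ (Fin n),
      dotProduct z (P.mulVec z) = inner ℝ z (T z) := by
    intro z
    rw [EuclideanSpace.inner_eq_star_dotProduct]
    simp only [Matrix.ofLp_toEuclideanCLM, star_trivial]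
    rw [dotProduct_comm]
    rfl
  refine ⟨c, ‖T‖ + 2 * m ^ 2 + 2, hc0, by positivity, fun z w => ⟨lower z w, ?_⟩⟩
  have h1 : dotProduct z (P.mulVec z) ≤ ‖T‖ * ‖z‖ ^ 2 := by
    rw [hdot z]
    calc (inner ℝ z (T z) : ℝ) ≤ ‖z‖ * ‖T z‖ := real_inner_le_norm _ _
      _ ≤ ‖z‖ * (‖T‖ * ‖z‖) := by
          exact mul_le_mul_of_nonneg_left (T.le_opNorm z) (norm_nonneg z)
      _ = ‖T‖ * ‖z‖ ^ 2 := by ring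
  have h2 : ‖w - M z‖ ^ 2 ≤ 2 * ‖w‖ ^ 2 + 2 * m ^ 2 * ‖z‖ ^ 2 := by
    have hb : ‖w - M z‖ ≤ ‖w‖ + m * ‖z‖ := by
      calc ‖w - M z‖ ≤ ‖w‖ + ‖M z‖ := norm_sub_le _ _
        _ ≤ ‖w‖ + m * ‖z‖ := by have := M.le_opNorm z; linarith
    nlinarith [norm_nonneg (w - M z), norm_nonneg w, norm_nonneg z,
      mul_nonneg hm (norm_nonneg z), sq_nonneg (‖w‖ - m * ‖z‖)]
  have hTnn : 0 ≤ ‖T‖ := norm_nonneg _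
  nlinarith [sq_nonneg ‖z‖, sq_nonneg ‖w‖, mul_nonneg hTnn (sq_nonneg ‖w‖)]
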